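/- For the matrices G_{ij} (identity except (i,i) entry t_j and (i,j) entry 1-t_i) over ℂ[t_1^{±1},…,t_n^{±1}], the relation G_{ij}·G_{kj} = G_{kj}·G_{ij} holds for pairwise distinct indices i, j, k. -/

import Mathlib

/-- The multivariate Laurent polynomial ring `ℂ[t₁^{±1}, …, t_n^{±1}]`,
realized as the group algebra of `ℤⁿ` over `ℂ`. -/
abbrev LaurentRing (n : ℕ) := AddMonoidAlgebra ℂ (Fin n →₀ ℤ)

/-- The variable `t_j`. -/
noncomputable def tvar {n : ℕ} (j : Fin n) : LaurentRing n :=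
  AddMonoidAlgebra.single (Finsupp.single j 1) 1

/-- The extended Gassner matrix `G_{ij}`: identity except that the `(i,i)` entry
is `t_j` and the `(i,j)` entry is `1 - t_i`. -/
noncomputable def gassnerG {n : ℕ} (i j : Fin n) :
    Matrix (Fin n) (Fin n) (LaurentRing n) :=
  Matrix.of fun k l =>
    if k = i ∧ l = i then tvar j
    else if k = i ∧ l = j then 1 - tvar i
    else if k = l then 1 else 0

lemma gassnerG_eq {n : ℕ} (i j : Fin n) (hij : i ≠ j) :
    gassnerG i j = 1 + (Matrix.single i i (tvar j - 1)
      + Matrix.single i j (1 - tvar i)) := by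
  ext a b : 2
  simp only [gassnerG, Matrix.of_apply, Matrix.add_apply, Matrix.one_apply,
    Matrix.single]
  by_cases ha : a = i <;> by_cases hb : b = i <;> by_cases hb' : b = j <;>
    simp_all [eq_comm]

/-- Second McCool relation: `G_{ij}` and `G_{kj}` commute for distinct `i, j, k`. -/
theorem mccool_relation_two (n : ℕ) (i j k : Fin n)
    (hij : i ≠ j) (hik : i ≠ k) (hjk : j ≠ k) :
    gassnerG i j * gassnerG k j = gassnerG k j * gassnerG i j := by
  rw [gassnerG_eq i j hij, gassnerG_eq k j hjk.symm]
  set X := Matrix.single i i (tvar j - 1) + Matrix.single i j (1 - tvar i) with hX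
  set Y := Matrix.single k k (tvar j - 1) + Matrix.single k j (1 - tvar k) with hY
  have hXY : X * Y = 0 := by
    rw [hX, hY]
    simp [add_mul, mul_add, Matrix.single_mul_single_of_ne, hik, hjk, hik.symm]
  have hYX : Y * X = 0 := by
    rw [hX, hY]
    simp [add_mul, mul_add, Matrix.single_mul_single_of_ne, hik.symm, hij.symm, hjk]
  simp only [mul_add, add_mul, one_mul, mul_one, hXY, hYX]
  abel
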